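/- Define f : ℝ → ℝ by f(x) = |x| if |x| ≤ 1 and f(x) = 1 if |x| > 1, and let W : ℝ → ℝ be the 1-periodic function with W(y) = 1/2 − |y| for y ∈ [−1/2, 1/2]. Then for every λ, ε ∈ (0,1) and every locally absolutely continuous curve η : [0,∞) → ℝ, one has ∫₀^∞ e^{−λs} ( f(η(s)) + W(η(s)/ε) + |η̇(s)|²/2 ) ds ≥ ε / (2λ), the integral being well defined in [0,∞] since the integrand is nonnegative. -/

import Mathlib

open MeasureTheory Real Set

noncomputable section

/-- `f(x) = |x|` for `|x| ≤ 1`, and `f(x) = 1` for `|x| > 1`. -/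
def f (x : ℝ) : ℝ := if |x| ≤ 1 then |x| else 1

/-- The 1-periodic extension of `y ↦ 1/2 − |y|` from `[−1/2, 1/2]`; equivalently
`W(y) = 1/2 − dist(y, ℤ)`. -/
def W (y : ℝ) : ℝ := 1/2 - |y - round y|

/-- `η : [a,b] → ℝ` is absolutely continuous with (a.e.) derivative `η'`. -/
def IsAC1 (a b : ℝ) (η η' : ℝ → ℝ) : Prop :=
  IntegrableOn η' (Icc a b) volume ∧
    ∀ c d : ℝ, a ≤ c → c ≤ d → d ≤ b → η d - η c = ∫ s in c..d, η' s

lemma key_bound {ε : ℝ} (hε : 0 < ε) (hε1 : ε < 1) (x : ℝ) :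
    ε / 2 ≤ f x + W (x / ε) := by
  have hW0 : 0 ≤ W (x / ε) := by
    have := abs_sub_round (x / ε)
    simp only [W]; linarith
  rcases le_or_gt (ε / 2) |x| with hx | hx
  · have hf : ε / 2 ≤ f x := by
      unfold f
      split_ifs with h
      · exact hx
      · linarith
    linarith
  · have hxe : |x / ε| < 1 / 2 := by
      rw [abs_div, abs_of_pos hε, div_lt_iff₀ hε]
      calc |x| < ε / 2 := hx
        _ ≤ 1 / 2 * ε := by ring_nf; rfl
    have hr : round (x / ε) = 0 := by
      rw [round_eq_zero_iff]
      constructor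
      · linarith [neg_abs_le (x / ε)]
      · linarith [le_abs_self (x / ε)]
    have hf : f x = |x| := by
      unfold f
      rw [if_pos (by linarith : |x| ≤ 1)]
    rw [hf, W, hr]
    push_cast
    rw [sub_zero, abs_div, abs_of_pos hε]
    have hax : 0 ≤ |x| := abs_nonneg x
    have h2 : |x| / ε < 1 / 2 := by rwa [abs_div, abs_of_pos hε] at hxe
    have h1 : |x| / ε * ε = |x| := by field_simp
    nlinarith [h1, h2, hε, hε1]

lemma exp_integral : ∀ lam : ℝ, 0 < lam →
    (∫ s in Ioi (0:ℝ), Real.exp (-lam * s)) = 1 / lam := by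
  intro lam hlam
  have h := integral_Ioi_of_hasDerivAt_of_tendsto (f := fun x => -Real.exp (-lam * x) / lam)
    (f' := fun x => Real.exp (-lam * x)) (a := 0) (m := 0) ?_ ?_ ?_ ?_
  · rw [h]; simp [neg_div]
  · exact (by fun_prop : Continuous fun x => -Real.exp (-lam * x) / lam).continuousWithinAt
  · intro x _
    have : HasDerivAt (fun x : ℝ => Real.exp (-lam * x)) (Real.exp (-lam * x) * (-lam)) x := by
      simpa using ((hasDerivAt_id x).const_mul (-lam)).exp
    refine (this.neg.div_const lam).congr_deriv ?_
    rw [div_eq_iff hlam.ne']; ring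
  · exact exp_neg_integrableOn_Ioi 0 hlam
  · have : Filter.Tendsto (fun x : ℝ => Real.exp (-lam * x)) Filter.atTop (nhds 0) := by
      apply Real.tendsto_exp_atBot.comp
      exact Filter.Tendsto.const_mul_atTop_of_neg (by linarith) Filter.tendsto_id
    have := (this.neg.div_const lam)
    simpa using this

/-- Proposition 4.4(ii) (variational content): every locally absolutely continuous
curve pays discounted cost at least `ε/(2λ)`.  The integral is taken in `[0,∞]`
since the integrand is nonnegative. -/
theorem stmt_12 :
    ∀ lam ε : ℝ, 0 < lam → lam < 1 → 0 < ε → ε < 1 →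
      ∀ η η' : ℝ → ℝ, (∀ T : ℝ, 0 < T → IsAC1 0 T η η') →
        ENNReal.ofReal (ε / (2 * lam)) ≤
          ∫⁻ s in Ioi (0:ℝ),
            ENNReal.ofReal
              (Real.exp (-lam * s) * (f (η s) + W (η s / ε) + |η' s| ^ 2 / 2)) := by
  intro lam ε hlam hlam1 hε hε1 η η' _
  have hmono : ∫⁻ s in Ioi (0:ℝ), ENNReal.ofReal (Real.exp (-lam * s) * (ε / 2)) ≤
      ∫⁻ s in Ioi (0:ℝ), ENNReal.ofReal
        (Real.exp (-lam * s) * (f (η s) + W (η s / ε) + |η' s| ^ 2 / 2)) := by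
    apply lintegral_mono
    intro s
    apply ENNReal.ofReal_le_ofReal
    apply mul_le_mul_of_nonneg_left _ (Real.exp_nonneg _)
    have := key_bound hε hε1 (η s)
    have h2 : 0 ≤ |η' s| ^ 2 / 2 := by positivity
    linarith
  refine le_trans ?_ hmono
  have hint : IntegrableOn (fun s => Real.exp (-lam * s) * (ε / 2)) (Ioi (0:ℝ)) volume :=
    (exp_neg_integrableOn_Ioi 0 hlam).mul_const _
  rw [← ofReal_integral_eq_lintegral_ofReal hint
      (Filter.Eventually.of_forall fun s => by positivity)]
  apply ENNReal.ofReal_le_ofReal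
  rw [MeasureTheory.integral_mul_const, exp_integral lam hlam]
  have : ε / 2 * (1 / lam) = ε / (2 * lam) := by field_simp
  linarith
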